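/- Let F be an anti-invariant Riemannian submersion from a Sasakian manifold M(φ,ξ,η,g_M) with vertical structure vector field ξ onto a Riemannian manifold (N,g_N). Then the fibers of F are not totally umbilical. -/

import Mathlib

/-- Algebraic model of a Riemannian submersion `F : (M,g_M) → (N,g_N)`:
`Fn` plays the role of smooth functions on `M`, `VF` of vector fields on `M`,
`g` is the metric, `der` the directional derivative, `nabla` the Levi-Civita
connection, `bracket` the Lie bracket, and `vert`/`horiz` the projections onto
the vertical distribution `ker F_*` and the horizontal distribution
`(ker F_*)^⊥` determined by the fibers of the submersion. -/
structure RiemannianSubmersionData (Fn VF : Type) [CommRing Fn] [Algebra ℝ Fn]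
    [AddCommGroup VF] [Module Fn VF] where
  g : VF → VF → Fn
  g_symm : ∀ X Y, g X Y = g Y X
  g_add_left : ∀ X Y Z, g (X + Y) Z = g X Z + g Y Z
  g_smul_left : ∀ (f : Fn) (X Y : VF), g (f • X) Y = f * g X Y
  g_nondeg : ∀ X, (∀ Y, g X Y = 0) → X = 0
  der : VF → Fn → Fn
  der_add : ∀ X f₁ f₂, der X (f₁ + f₂) = der X f₁ + der X f₂
  der_mul : ∀ X f₁ f₂, der X (f₁ * f₂) = f₁ * der X f₂ + f₂ * der X f₁
  bracket : VF → VF → VF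
  nabla : VF → VF → VF
  nabla_add_left : ∀ X Y Z, nabla (X + Y) Z = nabla X Z + nabla Y Z
  nabla_add_right : ∀ X Y Z, nabla X (Y + Z) = nabla X Y + nabla X Z
  nabla_smul_left : ∀ (f : Fn) (X Y : VF), nabla (f • X) Y = f • nabla X Y
  nabla_smul_right : ∀ (f : Fn) (X Y : VF),
    nabla X (f • Y) = f • nabla X Y + der X f • Y
  torsion_free : ∀ X Y, nabla X Y - nabla Y X = bracket X Y
  compat : ∀ X Y Z, der X (g Y Z) = g (nabla X Y) Z + g Y (nabla X Z)
  vert : VF → VF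
  horiz : VF → VF
  vert_add : ∀ X Y, vert (X + Y) = vert X + vert Y
  vert_smul : ∀ (f : Fn) (X : VF), vert (f • X) = f • vert X
  horiz_add : ∀ X Y, horiz (X + Y) = horiz X + horiz Y
  horiz_smul : ∀ (f : Fn) (X : VF), horiz (f • X) = f • horiz X
  vert_add_horiz : ∀ X, vert X + horiz X = X
  vert_vert : ∀ X, vert (vert X) = vert X
  vert_horiz : ∀ X, vert (horiz X) = 0
  horiz_vert : ∀ X, horiz (vert X) = 0
  g_vert_horiz : ∀ X Y, g (vert X) (horiz Y) = 0
  vert_bracket : ∀ X Y, vert X = X → vert Y = Y → vert (bracket X Y) = bracket X Y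

namespace RiemannianSubmersionData

variable {Fn VF : Type} [CommRing Fn] [Algebra ℝ Fn] [AddCommGroup VF] [Module Fn VF]

/-- O'Neill tensor `T_E F = H∇_{VE}(VF) + V∇_{VE}(HF)`. -/
def T (S : RiemannianSubmersionData Fn VF) (E F : VF) : VF :=
  S.horiz (S.nabla (S.vert E) (S.vert F)) + S.vert (S.nabla (S.vert E) (S.horiz F))

/-- O'Neill tensor `A_E F = V∇_{HE}(HF) + H∇_{HE}(VF)`. -/
def A (S : RiemannianSubmersionData Fn VF) (E F : VF) : VF :=
  S.vert (S.nabla (S.horiz E) (S.horiz F)) + S.horiz (S.nabla (S.horiz E) (S.vert F))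

end RiemannianSubmersionData

/-- A Riemannian submersion from a Sasakian manifold `M(φ,ξ,η,g)` onto a
Riemannian manifold: the total space carries an almost contact metric structure
`(phi, xi, eta, g)` satisfying the Sasakian condition
`(∇_X φ)Y = g(X,Y)ξ - η(Y)X` (and hence `R(ξ,X)Y = g(X,Y)ξ - η(Y)X`). -/
structure SasakianSubmersionData (Fn VF : Type) [CommRing Fn] [Algebra ℝ Fn]
    [AddCommGroup VF] [Module Fn VF] extends RiemannianSubmersionData Fn VF where
  phi : VF → VF
  xi : VF
  eta : VF → Fn
  phi_add : ∀ X Y, phi (X + Y) = phi X + phi Y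
  phi_smul : ∀ (f : Fn) (X : VF), phi (f • X) = f • phi X
  eta_add : ∀ X Y, eta (X + Y) = eta X + eta Y
  eta_smul : ∀ (f : Fn) (X : VF), eta (f • X) = f * eta X
  phi_phi : ∀ X, phi (phi X) = -X + eta X • xi
  phi_xi : phi xi = 0
  eta_phi : ∀ X, eta (phi X) = 0
  eta_xi : eta xi = 1
  g_phi : ∀ X Y, g (phi X) (phi Y) = g X Y - eta X * eta Y
  eta_g : ∀ X, eta X = g X xi
  sasaki : ∀ X Y, nabla X (phi Y) - phi (nabla X Y) = g X Y • xi - eta Y • X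
  curv_xi : ∀ X Y, nabla xi (nabla X Y) - nabla X (nabla xi Y)
      - nabla (bracket xi X) Y = g X Y • xi - eta Y • X

namespace SasakianSubmersionData

variable {Fn VF : Type} [CommRing Fn] [Algebra ℝ Fn] [AddCommGroup VF] [Module Fn VF]

/-- Vertical part `BX` of `φX` for horizontal `X`. -/
def B (S : SasakianSubmersionData Fn VF) (X : VF) : VF := S.vert (S.phi X)

/-- Horizontal (`μ`-)part `CX` of `φX` for horizontal `X`. -/
def C (S : SasakianSubmersionData Fn VF) (X : VF) : VF := S.horiz (S.phi X)

/-- O'Neill tensor `T`. -/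
def T (S : SasakianSubmersionData Fn VF) : VF → VF → VF :=
  S.toRiemannianSubmersionData.T

/-- O'Neill tensor `A`. -/
def A (S : SasakianSubmersionData Fn VF) : VF → VF → VF :=
  S.toRiemannianSubmersionData.A

/-- `F` is anti-invariant: `φ(ker F_*) ⊆ (ker F_*)^⊥`. -/
def AntiInvariant (S : SasakianSubmersionData Fn VF) : Prop :=
  ∀ U, S.vert U = U → S.horiz (S.phi U) = S.phi U

end SasakianSubmersionData

section Aux

variable {Fn VF : Type} [CommRing Fn] [Algebra ℝ Fn] [AddCommGroup VF] [Module Fn VF]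

lemma aux_der_one (S : SasakianSubmersionData Fn VF) (X : VF) : S.der X 1 = 0 := by
  have h := S.der_mul X 1 1
  simp only [one_mul, mul_one] at h
  exact left_eq_add.mp h

lemma aux_half (a : Fn) (h : a + a = 0) : a = 0 := by
  have h2 : (2 : ℝ) • a = 0 := by rw [two_smul]; exact h
  have := congrArg (fun b => ((1:ℝ)/2) • b) h2
  simpa [smul_smul] using this

lemma aux_nabla_zero (S : SasakianSubmersionData Fn VF) (X : VF) : S.nabla X 0 = 0 := by
  have h := S.nabla_add_right X 0 0
  simp only [add_zero] at h
  exact (right_eq_add.mp h)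

lemma aux_g_xixi (S : SasakianSubmersionData Fn VF) : S.g S.xi S.xi = 1 := by
  rw [← S.eta_g, S.eta_xi]

lemma aux_eta_nabla_xi (S : SasakianSubmersionData Fn VF) (X : VF) :
    S.eta (S.nabla X S.xi) = 0 := by
  have h := S.compat X S.xi S.xi
  rw [aux_g_xixi, aux_der_one] at h
  rw [S.eta_g]
  apply aux_half
  rw [S.g_symm S.xi (S.nabla X S.xi)] at h
  linear_combination -h

lemma aux_nabla_xi (S : SasakianSubmersionData Fn VF) (X : VF) :
    S.nabla X S.xi = -S.phi X := by
  have hs := S.sasaki X S.xi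
  rw [S.phi_xi, aux_nabla_zero, S.eta_xi, one_smul, ← S.eta_g] at hs
  -- hs : 0 - φ(∇_X ξ) = η X • ξ - X
  have hphi : S.phi (S.nabla X S.xi) = X - S.eta X • S.xi := by
    have := congrArg Neg.neg hs
    simp only [zero_sub, neg_neg, neg_sub] at this
    exact this
  have h2 := congrArg S.phi hphi
  rw [S.phi_phi, aux_eta_nabla_xi, zero_smul, add_zero] at h2
  have h3 : S.phi (X - S.eta X • S.xi) = S.phi X := by
    rw [sub_eq_add_neg, ← neg_smul, S.phi_add, S.phi_smul, S.phi_xi, smul_zero, add_zero]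
  rw [h3] at h2
  exact neg_eq_iff_eq_neg.mp h2

lemma aux_horiz_xi (S : SasakianSubmersionData Fn VF) (hxi : S.vert S.xi = S.xi) :
    S.horiz S.xi = 0 := by
  have h := S.vert_add_horiz S.xi
  rw [hxi] at h
  exact (left_eq_add.mp h.symm)

lemma aux_T_xi (S : SasakianSubmersionData Fn VF) (hxi : S.vert S.xi = S.xi)
    (U : VF) (hU : S.vert U = U) :
    S.T U S.xi = -S.horiz (S.phi U) := by
  show S.toRiemannianSubmersionData.T U S.xi = _
  unfold RiemannianSubmersionData.T
  have hv0 : S.vert (0:VF) = 0 := by simpa using S.vert_smul 0 0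
  rw [hU, hxi, aux_horiz_xi S hxi, aux_nabla_zero, hv0, add_zero, aux_nabla_xi,
    show -S.phi U = (-1 : Fn) • S.phi U from (neg_one_smul Fn _).symm,
    S.horiz_smul, neg_one_smul]

end Aux

open SasakianSubmersionData in
/-- Theorem 2: for an anti-invariant Riemannian submersion from a Sasakian
manifold with vertical structure vector field `ξ` (whose fibers are not
contained in the line spanned by `ξ`, i.e. some vertical `U` has `φU ≠ 0`),
the fibers are not totally umbilical, i.e. there is no horizontal mean
curvature field `H` with `T_U W = g(U,W) H` for all vertical `U, W`. -/
theorem fibers_not_totally_umbilical {Fn VF : Type} [CommRing Fn] [Algebra ℝ Fn]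
    [AddCommGroup VF] [Module Fn VF]
    (S : SasakianSubmersionData Fn VF)
    (hxi : S.vert S.xi = S.xi)
    (hanti : S.AntiInvariant)
    (hnd : ∃ U, S.vert U = U ∧ S.phi U ≠ 0) :
    ¬ ∃ H : VF, S.horiz H = H ∧
        ∀ U W, S.vert U = U → S.vert W = W → S.T U W = S.g U W • H := by
  rintro ⟨H, hH, humb⟩
  obtain ⟨U, hU, hphiU⟩ := hnd
  -- H = 0 from T ξ ξ = 0
  have hTxixi := humb S.xi S.xi hxi hxi
  rw [aux_T_xi S hxi S.xi hxi, S.phi_xi, aux_g_xixi, one_smul] at hTxixi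
  have hH0 : H = 0 := by
    have := hTxixi.symm
    rw [show S.horiz (0 : VF) = 0 by
      have h := S.horiz_smul 0 0; simpa using h] at this
    simpa using this
  -- T U ξ = -φU but also = g(U,ξ) • H = 0
  have hTU := humb U S.xi hU hxi
  rw [aux_T_xi S hxi U hU, hanti U hU, hH0, smul_zero] at hTU
  exact hphiU (by simpa using hTU)
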